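/- Let ω ∈ (0,1) be a quadratic irrational and let F be the Gauss map F(x) = 1/x − ⌊1/x⌋. Then ω is purely periodic under F (i.e. F^[p](ω) = ω for some integer p ≥ 1) if and only if its Galois conjugate ω' satisfies ω' < −1. -/

import Mathlib

/-- The Gauss map `x ↦ 1/x - ⌊1/x⌋` on irrationals in `(0,1)`, extended by `0` elsewhere. -/
noncomputable def gaussMap (x : ℝ) : ℝ :=
  open Classical in
  if Irrational x ∧ x ∈ Set.Ioo (0 : ℝ) 1 then 1 / x - ⌊1 / x⌋ else 0

namespace QIGalois

structure S where
  x : ℝ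
  a : ℤ
  b : ℤ
  c : ℤ

/-- invariant along the orbit -/
def Good (s : S) : Prop :=
  s.x ∈ Set.Ioo (0:ℝ) 1 ∧ Irrational s.x ∧ s.a ≠ 0 ∧
    (s.a:ℝ) * s.x ^ 2 + (s.b:ℝ) * s.x + (s.c:ℝ) = 0

noncomputable def conj (s : S) : ℝ := -(s.b:ℝ)/(s.a:ℝ) - s.x

noncomputable def step (s : S) : S :=
  ⟨1 / s.x - ⌊1 / s.x⌋, s.c, s.b + 2 * s.c * ⌊1 / s.x⌋, s.a + s.b * ⌊1 / s.x⌋ + s.c * ⌊1 / s.x⌋ ^ 2⟩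

noncomputable def orb (s : S) (t : ℕ) : S := step^[t] s

lemma irrational_ne_ratio {x : ℝ} (h : Irrational x) (m k : ℤ) (hm : m ≠ 0)
    (he : (m:ℝ) * x = (k:ℝ)) : False := by
  have : x = (((k:ℚ)/(m:ℚ) : ℚ) : ℝ) := by
    have hm' : (m:ℝ) ≠ 0 := Int.cast_ne_zero.2 hm
    push_cast
    field_simp
    linarith [he]
  exact h ⟨_, this.symm⟩

lemma floor_pos {x : ℝ} (hx : x ∈ Set.Ioo (0:ℝ) 1) : 1 ≤ ⌊1/x⌋ := by
  rw [Int.le_floor]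
  obtain ⟨h0, h1⟩ := hx
  rw [le_div_iff₀ h0]
  push_cast; linarith

lemma c_ne_zero {s : S} (h : Good s) : s.c ≠ 0 := by
  obtain ⟨hx, hirr, ha, hroot⟩ := h
  intro hc
  rw [hc] at hroot
  have hx0 : s.x ≠ 0 := ne_of_gt hx.1
  have h2 : ((s.a:ℝ) * s.x + (s.b:ℝ)) * s.x = 0 := by push_cast at hroot ⊢; ring_nf; ring_nf at hroot; linarith
  rcases mul_eq_zero.1 h2 with h3 | h3
  · exact irrational_ne_ratio hirr s.a (-s.b) ha (by push_cast; linarith)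
  · exact hx0 h3

lemma conj_irrational {s : S} (h : Good s) : Irrational (conj s) := by
  obtain ⟨hx, hirr, ha, hroot⟩ := h
  have : conj s = ((-s.b/s.a : ℚ) : ℝ) - s.x := by
    unfold conj; push_cast; ring
  rw [this]
  exact hirr.ratCast_sub (q := _)

lemma mul_conj {s : S} (h : Good s) : (s.a:ℝ) * s.x * conj s = s.c := by
  obtain ⟨hx, hirr, ha, hroot⟩ := h
  have ha' : (s.a:ℝ) ≠ 0 := Int.cast_ne_zero.2 ha
  unfold conj
  field_simp
  linear_combination (-1 : ℝ) * hroot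

lemma conj_ne_zero {s : S} (h : Good s) : conj s ≠ 0 := by
  intro h0
  exact (conj_irrational h).ne_int 0 (by rw [h0]; norm_num)

lemma good_step {s : S} (h : Good s) : Good (step s) := by
  obtain ⟨hx, hirr, ha, hroot⟩ := h
  have hx0 : s.x ≠ 0 := ne_of_gt hx.1
  have hirr1 : Irrational (1 / s.x - ⌊1 / s.x⌋) := by
    have := hirr.inv
    rw [← one_div] at this
    exact this.sub_intCast _
  refine ⟨⟨?_, ?_⟩, hirr1, c_ne_zero ⟨hx, hirr, ha, hroot⟩, ?_⟩
  · have h0 : (0:ℝ) ≤ Int.fract (1/s.x) := Int.fract_nonneg _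
    have hne : Int.fract (1/s.x) ≠ 0 := by
      intro h0'
      have : (1:ℝ)/s.x - ⌊1/s.x⌋ = 0 := h0'
      exact hirr1 ⟨0, by push_cast; linarith [this]⟩
    show (0:ℝ) < 1 / s.x - ⌊1 / s.x⌋
    have h2 : (0:ℝ) < Int.fract (1/s.x) := lt_of_le_of_ne h0 (Ne.symm hne)
    have h3 : Int.fract (1/s.x) = 1/s.x - ⌊1/s.x⌋ := (Int.self_sub_floor _).symm
    rw [h3] at h2
    linarith
  · show (1:ℝ) / s.x - ⌊1 / s.x⌋ < 1
    have h2 := Int.fract_lt_one (1/s.x)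
    have h3 : Int.fract (1/s.x) = 1/s.x - ⌊1/s.x⌋ := (Int.self_sub_floor _).symm
    rw [h3] at h2
    linarith
  · show (s.c:ℝ) * (1 / s.x - ⌊1 / s.x⌋) ^ 2
        + ((s.b + 2 * s.c * ⌊1 / s.x⌋ : ℤ):ℝ) * (1 / s.x - ⌊1 / s.x⌋)
        + ((s.a + s.b * ⌊1 / s.x⌋ + s.c * ⌊1 / s.x⌋ ^ 2 : ℤ):ℝ) = 0
    push_cast
    field_simp
    linear_combination hroot

lemma step_x_gauss {s : S} (h : Good s) : (step s).x = gaussMap s.x := by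
  obtain ⟨hx, hirr, ha, hroot⟩ := h
  unfold gaussMap step
  rw [if_pos ⟨hirr, hx⟩]

lemma conj_step {s : S} (h : Good s) :
    conj (step s) = 1 / conj s - (⌊1 / s.x⌋ : ℝ) := by
  have hh := h
  obtain ⟨hx, hirr, ha, hroot⟩ := h
  have hx0 : s.x ≠ 0 := ne_of_gt hx.1
  have ha' : (s.a:ℝ) ≠ 0 := Int.cast_ne_zero.2 ha
  have hc' : (s.c:ℝ) ≠ 0 := Int.cast_ne_zero.2 (c_ne_zero hh)
  have hu : conj s ≠ 0 := conj_ne_zero hh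
  have hm : (s.a:ℝ) * s.x * conj s = s.c := mul_conj hh
  show -((s.b + 2 * s.c * ⌊1 / s.x⌋ : ℤ):ℝ)/((s.c:ℤ):ℝ) - (1 / s.x - ⌊1 / s.x⌋)
      = 1 / conj s - (⌊1 / s.x⌋ : ℝ)
  have h1u : 1 / conj s = (s.a:ℝ) * s.x / s.c := by
    rw [eq_div_iff hc', ← hm]
    field_simp
  rw [h1u]
  push_cast
  field_simp
  linear_combination (-1 : ℝ) * hroot

lemma conj_unique {x : ℝ} (hirr : Irrational x) {a₁ b₁ c₁ a₂ b₂ c₂ : ℤ}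
    (ha₁ : a₁ ≠ 0) (ha₂ : a₂ ≠ 0)
    (h₁ : (a₁:ℝ) * x ^ 2 + (b₁:ℝ) * x + (c₁:ℝ) = 0)
    (h₂ : (a₂:ℝ) * x ^ 2 + (b₂:ℝ) * x + (c₂:ℝ) = 0) :
    -(b₁:ℝ)/(a₁:ℝ) - x = -(b₂:ℝ)/(a₂:ℝ) - x := by
  have key : a₂ * b₁ - a₁ * b₂ = 0 := by
    by_contra hne
    exact irrational_ne_ratio hirr (a₂ * b₁ - a₁ * b₂) (a₁ * c₂ - a₂ * c₁) hne
      (by push_cast; linear_combination (a₂:ℝ) * h₁ - (a₁:ℝ) * h₂)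
  have ha₁' : (a₁:ℝ) ≠ 0 := Int.cast_ne_zero.2 ha₁
  have ha₂' : (a₂:ℝ) ≠ 0 := Int.cast_ne_zero.2 ha₂
  have key' : (a₂:ℝ) * b₁ = a₁ * b₂ := by
    have := congrArg (Int.cast : ℤ → ℝ) key
    push_cast at this; linarith
  field_simp
  linear_combination -key'

/-! orbit basics -/

lemma orb_zero (s : S) : orb s 0 = s := rfl

lemma orb_succ (s : S) (t : ℕ) : orb s (t+1) = step (orb s t) :=
  Function.iterate_succ_apply' _ _ _

lemma good_orb {s : S} (h : Good s) (t : ℕ) : Good (orb s t) := by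
  induction t with
  | zero => exact h
  | succ t ih => rw [orb_succ]; exact good_step ih

lemma x_orb {s : S} (h : Good s) (t : ℕ) : (orb s t).x = gaussMap^[t] s.x := by
  induction t with
  | zero => rfl
  | succ t ih =>
    rw [orb_succ, Function.iterate_succ_apply', ← ih, step_x_gauss (good_orb h t)]

/-! reduced states -/

lemma conj_step_lt {s : S} (h : Good s) (hc : conj s < -1) : conj (step s) < -1 := by
  rw [conj_step h]
  have hn : (1:ℝ) ≤ (⌊1/s.x⌋ : ℝ) := by exact_mod_cast floor_pos h.1
  have h1 : 1 / conj s < 0 := by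
    apply div_neg_of_pos_of_neg one_pos; linarith
  linarith

lemma ac_neg {s : S} (h : Good s) (hc : conj s < -1) : s.a * s.c < 0 := by
  have hm : (s.a:ℝ) * s.x * conj s = s.c := mul_conj h
  have : ((s.a * s.c : ℤ):ℝ) < 0 := by
    push_cast
    have : (s.a:ℝ) * s.c = ((s.a:ℝ))^2 * s.x * conj s := by
      rw [← hm]; ring
    rw [this]
    have ha2 : (0:ℝ) < (s.a:ℝ)^2 := by
      have : (s.a:ℝ) ≠ 0 := Int.cast_ne_zero.2 h.2.2.1
      positivity
    have hx0 : (0:ℝ) < s.x := h.1.1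
    exact mul_neg_of_pos_of_neg (mul_pos ha2 hx0) (by linarith)
  exact_mod_cast this

def disc (s : S) : ℤ := s.b^2 - 4 * s.a * s.c

lemma disc_step (s : S) : disc (step s) = disc s := by
  unfold disc step; ring

lemma disc_orb (s : S) (t : ℕ) : disc (orb s t) = disc s := by
  induction t with
  | zero => rfl
  | succ t ih => rw [orb_succ, disc_step, ih]

lemma int_abs_le_sq (b : ℤ) : |b| ≤ b^2 := by
  rcases eq_or_ne b 0 with rfl | hb
  · norm_num
  · have h1 : 1 ≤ |b| := Int.one_le_abs hb
    calc |b| = |b| * 1 := (mul_one _).symm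
    _ ≤ |b| * |b| := by exact mul_le_mul_of_nonneg_left h1 (abs_nonneg b)
    _ = b^2 := by rw [← abs_mul, ← sq, abs_sq]

lemma bounds {s : S} (h : Good s) (hc : conj s < -1) :
    |s.a| ≤ disc s ∧ |s.b| ≤ disc s ∧ |s.c| ≤ disc s := by
  have hac := ac_neg h hc
  have hb := int_abs_le_sq s.b
  have habs : |s.a * s.c| = -(s.a * s.c) := abs_of_neg hac
  have h1 : |s.a| * |s.c| = -(s.a * s.c) := by rw [← abs_mul]; exact habs
  have ha1 : 1 ≤ |s.a| := Int.one_le_abs h.2.2.1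
  have hc1 : 1 ≤ |s.c| := Int.one_le_abs (c_ne_zero h)
  have hb2 : 0 ≤ s.b^2 := sq_nonneg _
  unfold disc
  constructor
  · nlinarith
  constructor
  · nlinarith
  · nlinarith

/-! descent -/

lemma step_floor_eq {s : S} (h : Good s) (hc : conj s < -1) :
    -1 < conj (step s) + (⌊1/s.x⌋:ℝ) ∧ conj (step s) + (⌊1/s.x⌋:ℝ) < 0 := by
  rw [conj_step h]
  have h1 : -1 < 1 / conj s := by
    rw [lt_div_iff_of_neg (by linarith : conj s < 0)]
    linarith
  have h2 : 1 / conj s < 0 :=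
    div_neg_of_pos_of_neg one_pos (by linarith)
  constructor <;> linarith

lemma descend {s₁ s₂ : S} (h₁ : Good s₁) (h₂ : Good s₂)
    (hc₁ : conj s₁ < -1) (hc₂ : conj s₂ < -1)
    (hx : (step s₁).x = (step s₂).x) : s₁.x = s₂.x := by
  -- conjugates of the images agree
  have g₁ := good_step h₁
  have g₂ := good_step h₂
  have hcstep : conj (step s₁) = conj (step s₂) := by
    have e₂ := g₂.2.2.2
    rw [← hx] at e₂
    have := conj_unique g₁.2.1 g₁.2.2.1 g₂.2.2.1 g₁.2.2.2 e₂
    unfold conj; rw [hx] at this ⊢; exact this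
  obtain ⟨l₁, u₁⟩ := step_floor_eq h₁ hc₁
  obtain ⟨l₂, u₂⟩ := step_floor_eq h₂ hc₂
  rw [hcstep] at l₁ u₁
  have hn : ⌊1/s₁.x⌋ = ⌊1/s₂.x⌋ := by
    have d1 : ((⌊1/s₁.x⌋ - ⌊1/s₂.x⌋ : ℤ):ℝ) < 1 := by push_cast; linarith
    have d2 : (-1:ℝ) < ((⌊1/s₁.x⌋ - ⌊1/s₂.x⌋ : ℤ):ℝ) := by push_cast; linarith
    have d1' : (⌊1/s₁.x⌋ - ⌊1/s₂.x⌋ : ℤ) < 1 := by exact_mod_cast d1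
    have d2' : (-1 : ℤ) < (⌊1/s₁.x⌋ - ⌊1/s₂.x⌋ : ℤ) := by exact_mod_cast d2
    omega
  -- recover x from step value
  have hx₁0 : s₁.x ≠ 0 := ne_of_gt h₁.1.1
  have hx₂0 : s₂.x ≠ 0 := ne_of_gt h₂.1.1
  have e1 : (step s₁).x + (⌊1/s₁.x⌋:ℝ) = 1 / s₁.x := by
    show 1 / s₁.x - ⌊1/s₁.x⌋ + (⌊1/s₁.x⌋:ℝ) = 1 / s₁.x; ring
  have e2 : (step s₂).x + (⌊1/s₂.x⌋:ℝ) = 1 / s₂.x := by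
    show 1 / s₂.x - ⌊1/s₂.x⌋ + (⌊1/s₂.x⌋:ℝ) = 1 / s₂.x; ring
  have : 1 / s₁.x = 1 / s₂.x := by rw [← e1, ← e2, hx, hn]
  field_simp at this
  linarith


lemma conj_eq_of_x_eq {s₁ s₂ : S} (h₁ : Good s₁) (h₂ : Good s₂) (hx : s₁.x = s₂.x) :
    conj s₁ = conj s₂ := by
  have e₂ := h₂.2.2.2
  rw [← hx] at e₂
  have h := conj_unique h₁.2.1 h₁.2.2.1 h₂.2.2.1 h₁.2.2.2 e₂
  unfold conj
  rw [← hx]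
  exact h

lemma conj_orb_succ {s : S} (h : Good s) (t : ℕ) :
    conj (orb s (t+1)) = 1 / conj (orb s t) - (⌊1/(orb s t).x⌋ : ℝ) := by
  rw [orb_succ]; exact conj_step (good_orb h t)

lemma step_x (s : S) : (step s).x = 1 / s.x - (⌊1/s.x⌋ : ℝ) := rfl

/-! ## Forward direction: periodic implies reduced -/

lemma forward {s : S} (hg : Good s) {p : ℕ} (hp : 1 ≤ p) (hper : gaussMap^[p] s.x = s.x) :
    conj s < -1 := by
  have G := good_orb hg
  have hxper : ∀ t, (orb s (t+p)).x = (orb s t).x := by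
    intro t
    rw [x_orb hg, x_orb hg, Function.iterate_add_apply, hper]
  have hcper : ∀ t, conj (orb s (t+p)) = conj (orb s t) := fun t =>
    conj_eq_of_x_eq (G _) (G _) (hxper t)
  have hcp0 : ∀ k, conj (orb s (k*p)) = conj s := by
    intro k
    induction k with
    | zero => rw [Nat.zero_mul]; rw [orb_zero]
    | succ k ih =>
      have h1 : (k+1)*p = k*p + p := by ring
      rw [h1, hcper (k*p)]
      exact ih
  set X : ℕ → ℝ := fun t => (orb s t).x with hX
  set C : ℕ → ℝ := fun t => conj (orb s t) with hC
  have hn1 : ∀ t, (1:ℝ) ≤ (⌊1/X t⌋ : ℝ) := fun t => by exact_mod_cast floor_pos (G t).1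
  have hXpos : ∀ t, 0 < X t := fun t => (G t).1.1
  have hXlt1 : ∀ t, X t < 1 := fun t => (G t).1.2
  have hrecC : ∀ t, C (t+1) = 1 / C t - (⌊1/X t⌋:ℝ) := fun t => conj_orb_succ hg t
  have hrecX : ∀ t, X (t+1) = 1 / X t - (⌊1/X t⌋:ℝ) := by
    intro t
    show (orb s (t+1)).x = _
    rw [orb_succ, step_x]
  have hCne : ∀ t, C t ≠ 0 := fun t => conj_ne_zero (G t)
  have hT : ∃ T, C T < 0 := by
    by_contra hno
    push_neg at hno
    have hCpos : ∀ t, 0 < C t := fun t => lt_of_le_of_ne (hno t) (Ne.symm (hCne t))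
    have hClt1 : ∀ t, C t < 1 := by
      intro t
      have h1 : 1 / C t = C (t+1) + (⌊1/X t⌋:ℝ) := by rw [hrecC t]; ring
      have h2 : 1 < 1 / C t := by rw [h1]; linarith [hCpos (t+1), hn1 t]
      have h3 : 0 < C t := hCpos t
      nlinarith [one_div_mul_cancel (hCne t)]
    set D : ℕ → ℝ := fun t => |C t - X t| with hDdef
    have hD0 : 0 < D 0 := by
      rw [show D 0 = |C 0 - X 0| from rfl, abs_pos, sub_ne_zero]
      intro heq
      have hc0 : C 0 = conj s := rfl
      have hx0 : X 0 = s.x := rfl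
      rw [hc0, hx0] at heq
      unfold conj at heq
      have ha' : (s.a:ℝ) ≠ 0 := Int.cast_ne_zero.2 hg.2.2.1
      refine irrational_ne_ratio hg.2.1 (2*s.a) (-s.b) (mul_ne_zero two_ne_zero hg.2.2.1) ?_
      push_cast
      field_simp at heq
      linarith
    have hDpos_rec : ∀ t, 0 < D t → 0 < D (t+1) ∧ D t < D (t+1) := by
      intro t ht
      have hprod : 0 < C t * X t := mul_pos (hCpos t) (hXpos t)
      have hdiff : C (t+1) - X (t+1) = (X t - C t) / (C t * X t) := by
        have hgoal : C (t+1) - X (t+1) = 1 / C t - 1 / X t := by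
          rw [hrecC t, hrecX t]; ring
        rw [hgoal, div_sub_div _ _ (hCne t) (ne_of_gt (hXpos t)), one_mul, mul_one]
      have habs : D (t+1) = D t / (C t * X t) := by
        show |C (t+1) - X (t+1)| = |C t - X t| / (C t * X t)
        rw [hdiff, abs_div, abs_of_pos hprod, abs_sub_comm]
      have hq1 : C t * X t < 1 := by nlinarith [hCpos t, hXpos t, hClt1 t, hXlt1 t]
      constructor
      · rw [habs]; exact div_pos ht hprod
      · rw [habs, lt_div_iff₀ hprod]; nlinarith
    have hDpos : ∀ t, 0 < D t := by
      intro t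
      induction t with
      | zero => exact hD0
      | succ t ih => exact (hDpos_rec t ih).1
    have hmono : StrictMono D := strictMono_nat_of_lt_succ (fun t => (hDpos_rec t (hDpos t)).2)
    have hDp : D p = D 0 := by
      show |C p - X p| = |C 0 - X 0|
      have h1 : C p = C 0 := by have := hcper 0; simpa using this
      have h2 : X p = X 0 := by have := hxper 0; simpa using this
      rw [h1, h2]
    exact absurd hDp (ne_of_gt (hmono (by omega : 0 < p)))
  obtain ⟨T, hT⟩ := hT
  have hT1 : C (T+1) < -1 := by
    rw [hrecC T]
    have h1 : 1 / C T < 0 := div_neg_of_pos_of_neg one_pos hT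
    linarith [hn1 T]
  have hall : ∀ k, C (T+1+k) < -1 := by
    intro k
    induction k with
    | zero => exact hT1
    | succ k ih =>
      have h1 : conj (step (orb s (T+1+k))) < -1 := conj_step_lt (G (T+1+k)) ih
      rw [← orb_succ] at h1
      exact h1
  have hge : T+1 ≤ (T+2)*p := by
    have h1 : (T+2)*1 ≤ (T+2)*p := Nat.mul_le_mul_left (T+2) hp
    omega
  obtain ⟨k, hk⟩ : ∃ k, (T+2)*p = T+1+k := ⟨(T+2)*p - (T+1), by omega⟩
  have hfin : C ((T+2)*p) < -1 := by rw [hk]; exact hall k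
  have := hcp0 (T+2)
  rw [show conj (orb s ((T+2)*p)) = C ((T+2)*p) from rfl] at this
  linarith [this ▸ hfin]

/-! ## Backward direction: reduced implies purely periodic -/

lemma x_eq_of_triple_eq {s₁ s₂ : S} (h₁ : Good s₁) (h₂ : Good s₂) (hc₁ : conj s₁ < -1)
    (hA : s₁.a = s₂.a) (hB : s₁.b = s₂.b) (hC : s₁.c = s₂.c) : s₁.x = s₂.x := by
  have e₂ := h₂.2.2.2
  rw [← hA, ← hB, ← hC] at e₂
  have key : (s₂.x - s₁.x) * ((s₁.a:ℝ)*(s₂.x+s₁.x) + (s₁.b:ℝ)) = 0 := by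
    linear_combination e₂ - h₁.2.2.2
  rcases mul_eq_zero.1 key with h | h
  · exact (sub_eq_zero.1 h).symm
  · exfalso
    have ha' : (s₁.a:ℝ) ≠ 0 := Int.cast_ne_zero.2 h₁.2.2.1
    have h2 : conj s₁ = s₂.x := by
      unfold conj
      field_simp
      linear_combination -h
    have := h₂.1.1
    rw [← h2] at this
    linarith

lemma backward {s : S} (hg : Good s) (hred : conj s < -1) :
    ∃ p : ℕ, 1 ≤ p ∧ gaussMap^[p] s.x = s.x := by
  have G := good_orb hg
  have R : ∀ t, conj (orb s t) < -1 := by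
    intro t
    induction t with
    | zero => exact hred
    | succ t ih => rw [orb_succ]; exact conj_step_lt (G t) ih
  set D := disc s with hD
  have hmap : Set.MapsTo (fun t => ((orb s t).a, (orb s t).b, (orb s t).c)) Set.univ
      (Set.Icc ((-D, -D, -D) : ℤ×ℤ×ℤ) (D, D, D)) := by
    intro t _
    obtain ⟨h1, h2, h3⟩ := bounds (G t) (R t)
    rw [disc_orb] at h1 h2 h3
    rw [abs_le] at h1 h2 h3
    simp only [Set.mem_Icc, Prod.mk_le_mk]
    exact ⟨⟨h1.1, h2.1, h3.1⟩, ⟨h1.2, h2.2, h3.2⟩⟩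
  obtain ⟨t₁, -, t₂, -, hne, heq⟩ :=
    Set.infinite_univ.exists_ne_map_eq_of_mapsTo hmap (Set.finite_Icc _ _)
  have main : ∀ u v : ℕ, u < v →
      ((orb s u).a, (orb s u).b, (orb s u).c) = ((orb s v).a, (orb s v).b, (orb s v).c) →
      ∃ p : ℕ, 1 ≤ p ∧ gaussMap^[p] s.x = s.x := by
    intro u v huv htrip
    simp only [Prod.mk.injEq] at htrip
    obtain ⟨e1, e2, e3⟩ := htrip
    have hx0 : (orb s u).x = (orb s v).x := x_eq_of_triple_eq (G u) (G v) (R u) e1 e2 e3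
    have desc : ∀ k, k ≤ u → (orb s (u - k)).x = (orb s (v - k)).x := by
      intro k
      induction k with
      | zero => intro _; simpa using hx0
      | succ k ih =>
        intro hk
        have e := ih (by omega)
        have eu : u - k = (u - (k+1)) + 1 := by omega
        have ev : v - k = (v - (k+1)) + 1 := by omega
        rw [eu, ev, orb_succ, orb_succ] at e
        exact descend (G _) (G _) (R _) (R _) e
    have efin := desc u le_rfl
    rw [Nat.sub_self] at efin
    refine ⟨v - u, by omega, ?_⟩
    rw [← x_orb hg]
    exact efin.symm
  rcases hne.lt_or_gt with h | h
  · exact main t₁ t₂ h heq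
  · exact main t₂ t₁ h heq.symm

end QIGalois

theorem gauss_purely_periodic_iff
    (ω : ℝ) (hmem : ω ∈ Set.Ioo (0 : ℝ) 1) (hirr : Irrational ω)
    (a b c : ℤ) (ha : a ≠ 0)
    (hroot : (a : ℝ) * ω ^ 2 + (b : ℝ) * ω + (c : ℝ) = 0) :
    (∃ p : ℕ, 1 ≤ p ∧ gaussMap^[p] ω = ω) ↔ -(b : ℝ) / (a : ℝ) - ω < -1 := by
  have hg : QIGalois.Good ⟨ω, a, b, c⟩ := ⟨hmem, hirr, ha, hroot⟩
  have hconj : QIGalois.conj ⟨ω, a, b, c⟩ = -(b:ℝ)/(a:ℝ) - ω := rfl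
  constructor
  · rintro ⟨p, hp, hper⟩
    rw [← hconj]
    exact QIGalois.forward hg hp hper
  · intro h
    exact QIGalois.backward hg (by rw [hconj]; exact h)
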